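/- Let V be a real vector space of dimension 2n+2, τ, η ∈ V* linear forms, and ω a skew-symmetric bilinear form on V such that τ ∧ η ∧ ω^n ≠ 0 (i.e. the (2n+2)-multilinear form obtained from τ, η and n copies of ω is a volume form). Then the linear map ♭ : V → V* defined by ♭(v) = τ(v)·τ + ω(v,·) + η(v)·η is a linear isomorphism. -/

import Mathlib

/-- The `(2n+2)`-linear alternating "volume" expression built from the 1-forms `τ, η`
and `n` copies of the skew bilinear form `ω` (antisymmetrization of their product). -/
noncomputable def cowedge (n : ℕ) {V : Type} [AddCommGroup V] [Module ℝ V]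
    (τ η : Module.Dual ℝ V) (ω : V →ₗ[ℝ] Module.Dual ℝ V)
    (v : Fin (2 * n + 2) → V) : ℝ :=
  ∑ σ : Equiv.Perm (Fin (2 * n + 2)),
    ((Equiv.Perm.sign σ : ℤ) : ℝ) *
      (τ (v (σ ⟨0, by omega⟩)) * η (v (σ ⟨1, by omega⟩)) *
        ∏ i : Fin n,
          ω (v (σ ⟨2 * (i : ℕ) + 2, by have := i.isLt; omega⟩))
            (v (σ ⟨2 * (i : ℕ) + 3, by have := i.isLt; omega⟩)))

open Finset

section Aux
variable {V : Type} [AddCommGroup V] [Module ℝ V]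

/-- The family of bilinear forms: factor `0` is `τ ⊗ η`, factors `1..n` are `ω`. -/
noncomputable def cowB (n : ℕ) (τ η : Module.Dual ℝ V) (ω : V →ₗ[ℝ] Module.Dual ℝ V) :
    Fin (n + 1) → V →ₗ[ℝ] V →ₗ[ℝ] ℝ :=
  Fin.cons
    (LinearMap.mk₂ ℝ (fun x y => τ x * η y)
      (fun a b c => by simp [map_add]; ring)
      (fun c a b => by simp [smul_eq_mul]; ring)
      (fun a b c => by simp [map_add]; ring)
      (fun c a b => by simp [smul_eq_mul]; ring))
    fun _ => ω

lemma cowF_prod (n : ℕ) (τ η : Module.Dual ℝ V) (ω : V →ₗ[ℝ] Module.Dual ℝ V)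
    (w : Fin (2 * n + 2) → V) :
    τ (w ⟨0, by omega⟩) * η (w ⟨1, by omega⟩) *
      ∏ i : Fin n,
        ω (w ⟨2 * (i : ℕ) + 2, by have := i.isLt; omega⟩)
          (w ⟨2 * (i : ℕ) + 3, by have := i.isLt; omega⟩)
    = ∏ m : Fin (n + 1),
        cowB n τ η ω m (w ⟨2 * (m : ℕ), by have := m.isLt; omega⟩)
          (w ⟨2 * (m : ℕ) + 1, by have := m.isLt; omega⟩) := by
  rw [Fin.prod_univ_succ]
  congr 1

lemma prod_update_split (n : ℕ) (τ η : Module.Dual ℝ V) (ω : V →ₗ[ℝ] Module.Dual ℝ V)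
    (dec : DecidableEq (Fin (2 * n + 2))) (v : Fin (2 * n + 2) → V) (j : Fin (2 * n + 2))
    (m0 : Fin (n + 1)) (hm0 : (j : ℕ) / 2 = (m0 : ℕ)) (z : V) :
    (∏ m : Fin (n + 1),
        cowB n τ η ω m
          (@Function.update _ _ dec v j z ⟨2 * (m : ℕ), by have := m.isLt; omega⟩)
          (@Function.update _ _ dec v j z ⟨2 * (m : ℕ) + 1, by have := m.isLt; omega⟩))
    = cowB n τ η ω m0
        (@Function.update _ _ dec v j z ⟨2 * (m0 : ℕ), by have := m0.isLt; omega⟩)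
        (@Function.update _ _ dec v j z ⟨2 * (m0 : ℕ) + 1, by have := m0.isLt; omega⟩)
      * ∏ m ∈ Finset.univ.erase m0,
          cowB n τ η ω m (v ⟨2 * (m : ℕ), by have := m.isLt; omega⟩)
            (v ⟨2 * (m : ℕ) + 1, by have := m.isLt; omega⟩) := by
  rw [← Finset.mul_prod_erase _ _ (Finset.mem_univ m0)]
  congr 1
  refine Finset.prod_congr rfl fun m hm => ?_
  have hne : (m : ℕ) ≠ (m0 : ℕ) := fun h => (Finset.mem_erase.mp hm).1 (Fin.ext h)
  have hj := j.isLt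
  rw [Function.update_of_ne (Fin.ne_of_val_ne (by simp only [Fin.val_mk]; omega)),
      Function.update_of_ne (Fin.ne_of_val_ne (by simp only [Fin.val_mk]; omega))]

/-- The multilinear map whose alternatization is `cowedge`. -/
noncomputable def cowF (n : ℕ) (τ η : Module.Dual ℝ V) (ω : V →ₗ[ℝ] Module.Dual ℝ V) :
    MultilinearMap ℝ (fun _ : Fin (2 * n + 2) => V) ℝ where
  toFun w :=
    τ (w ⟨0, by omega⟩) * η (w ⟨1, by omega⟩) *
      ∏ i : Fin n,
        ω (w ⟨2 * (i : ℕ) + 2, by have := i.isLt; omega⟩)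
          (w ⟨2 * (i : ℕ) + 3, by have := i.isLt; omega⟩)
  map_update_add' := by
    intro dec v j x y
    have hj := j.isLt
    have hlt : (j : ℕ) / 2 < n + 1 := by omega
    obtain ⟨m0, hm0⟩ : ∃ m0 : Fin (n + 1), (j : ℕ) / 2 = (m0 : ℕ) := ⟨⟨(j : ℕ) / 2, hlt⟩, rfl⟩
    rw [cowF_prod, cowF_prod, cowF_prod,
        prod_update_split n τ η ω dec v j m0 hm0,
        prod_update_split n τ η ω dec v j m0 hm0,
        prod_update_split n τ η ω dec v j m0 hm0]
    have hcase : j = (⟨2 * (m0 : ℕ), by have := m0.isLt; omega⟩ : Fin (2 * n + 2)) ∨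
        j = (⟨2 * (m0 : ℕ) + 1, by have := m0.isLt; omega⟩ : Fin (2 * n + 2)) := by
      rcases Nat.even_or_odd (j : ℕ) with he | ho
      · obtain ⟨t, ht⟩ := he
        exact Or.inl (Fin.ext (show (j : ℕ) = 2 * (m0 : ℕ) by omega))
      · obtain ⟨t, ht⟩ := ho
        exact Or.inr (Fin.ext (show (j : ℕ) = 2 * (m0 : ℕ) + 1 by omega))
    rcases hcase with h | h
    · have hne : (⟨2 * (m0 : ℕ) + 1, by have := m0.isLt; omega⟩ : Fin (2 * n + 2)) ≠ j := by
        have hv : (j : ℕ) = 2 * (m0 : ℕ) := by rw [h]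
        exact fun heq => by
          have hc := congrArg Fin.val heq
          simp only [Fin.val_mk] at hc
          omega
      rw [← h]
      simp only [Function.update_self, Function.update_of_ne hne]
      rw [map_add, LinearMap.add_apply]; ring
    · have hne : (⟨2 * (m0 : ℕ), by have := m0.isLt; omega⟩ : Fin (2 * n + 2)) ≠ j := by
        have hv : (j : ℕ) = 2 * (m0 : ℕ) + 1 := by rw [h]
        exact fun heq => by
          have hc := congrArg Fin.val heq
          simp only [Fin.val_mk] at hc
          omega
      rw [← h]
      simp only [Function.update_self, Function.update_of_ne hne]
      rw [map_add]; ring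
  map_update_smul' := by
    intro dec v j c x
    have hj := j.isLt
    have hlt : (j : ℕ) / 2 < n + 1 := by omega
    obtain ⟨m0, hm0⟩ : ∃ m0 : Fin (n + 1), (j : ℕ) / 2 = (m0 : ℕ) := ⟨⟨(j : ℕ) / 2, hlt⟩, rfl⟩
    rw [cowF_prod, cowF_prod,
        prod_update_split n τ η ω dec v j m0 hm0,
        prod_update_split n τ η ω dec v j m0 hm0]
    have hcase : j = (⟨2 * (m0 : ℕ), by have := m0.isLt; omega⟩ : Fin (2 * n + 2)) ∨
        j = (⟨2 * (m0 : ℕ) + 1, by have := m0.isLt; omega⟩ : Fin (2 * n + 2)) := by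
      rcases Nat.even_or_odd (j : ℕ) with he | ho
      · obtain ⟨t, ht⟩ := he
        exact Or.inl (Fin.ext (show (j : ℕ) = 2 * (m0 : ℕ) by omega))
      · obtain ⟨t, ht⟩ := ho
        exact Or.inr (Fin.ext (show (j : ℕ) = 2 * (m0 : ℕ) + 1 by omega))
    rcases hcase with h | h
    · have hne : (⟨2 * (m0 : ℕ) + 1, by have := m0.isLt; omega⟩ : Fin (2 * n + 2)) ≠ j := by
        have hv : (j : ℕ) = 2 * (m0 : ℕ) := by rw [h]
        exact fun heq => by
          have hc := congrArg Fin.val heq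
          simp only [Fin.val_mk] at hc
          omega
      rw [← h]
      simp only [Function.update_self, Function.update_of_ne hne]
      rw [map_smul, LinearMap.smul_apply]; simp only [smul_eq_mul]; ring
    · have hne : (⟨2 * (m0 : ℕ), by have := m0.isLt; omega⟩ : Fin (2 * n + 2)) ≠ j := by
        have hv : (j : ℕ) = 2 * (m0 : ℕ) + 1 := by rw [h]
        exact fun heq => by
          have hc := congrArg Fin.val heq
          simp only [Fin.val_mk] at hc
          omega
      rw [← h]
      simp only [Function.update_self, Function.update_of_ne hne]
      rw [map_smul]; simp only [smul_eq_mul]; ring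

@[simp] lemma cowF_apply (n : ℕ) (τ η : Module.Dual ℝ V) (ω : V →ₗ[ℝ] Module.Dual ℝ V)
    (w : Fin (2 * n + 2) → V) :
    cowF n τ η ω w =
      τ (w ⟨0, by omega⟩) * η (w ⟨1, by omega⟩) *
        ∏ i : Fin n,
          ω (w ⟨2 * (i : ℕ) + 2, by have := i.isLt; omega⟩)
            (w ⟨2 * (i : ℕ) + 3, by have := i.isLt; omega⟩) := rfl

lemma cowedge_eq_alt (n : ℕ) (τ η : Module.Dual ℝ V) (ω : V →ₗ[ℝ] Module.Dual ℝ V)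
    (w : Fin (2 * n + 2) → V) :
    (∑ σ : Equiv.Perm (Fin (2 * n + 2)),
      ((Equiv.Perm.sign σ : ℤ) : ℝ) *
        (τ (w (σ ⟨0, by omega⟩)) * η (w (σ ⟨1, by omega⟩)) *
          ∏ i : Fin n,
            ω (w (σ ⟨2 * (i : ℕ) + 2, by have := i.isLt; omega⟩))
              (w (σ ⟨2 * (i : ℕ) + 3, by have := i.isLt; omega⟩))))
    = MultilinearMap.alternatization (cowF n τ η ω) w := by
  rw [MultilinearMap.alternatization_apply]
  refine Finset.sum_congr rfl fun σ _ => ?_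
  rw [MultilinearMap.domDomCongr_apply, cowF_apply]
  simp only [Function.comp_apply, Units.smul_def, zsmul_eq_mul]

end Aux

lemma cowedge_eq_alt' (n : ℕ) {V : Type} [AddCommGroup V] [Module ℝ V]
    (τ η : Module.Dual ℝ V) (ω : V →ₗ[ℝ] Module.Dual ℝ V) (w : Fin (2 * n + 2) → V) :
    cowedge n τ η ω w = MultilinearMap.alternatization (cowF n τ η ω) w :=
  cowedge_eq_alt n τ η ω w

set_option maxHeartbeats 1000000 in
/-- On a `(2n+2)`-dimensional real vector space with linear forms `τ, η` and a skew
bilinear form `ω` such that `τ ∧ η ∧ ω^n` is a volume form, the flat map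
`♭(v) = τ(v)·τ + ω(v,·) + η(v)·η` is a linear isomorphism. -/
theorem flat_bijective (n : ℕ) (V : Type) [AddCommGroup V] [Module ℝ V]
    [FiniteDimensional ℝ V] (hdim : Module.finrank ℝ V = 2 * n + 2)
    (τ η : Module.Dual ℝ V) (ω : V →ₗ[ℝ] Module.Dual ℝ V)
    (hskew : ∀ v w : V, ω v w = - ω w v)
    (hvol : ∃ v : Fin (2 * n + 2) → V, cowedge n τ η ω v ≠ 0) :
    Function.Bijective (fun v : V => τ v • τ + ω v + η v • η) := by
  let L : V →ₗ[ℝ] Module.Dual ℝ V :=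
    { toFun := fun v => τ v • τ + ω v + η v • η
      map_add' := by
        intro a b
        simp only [map_add, add_smul]
        abel
      map_smul' := by
        intro c a
        simp only [map_smul, smul_eq_mul, RingHom.id_apply, smul_add, smul_smul] }
  have hker : ∀ u : V, L u = 0 → u = 0 := by
    intro u hLu
    have hLu' : τ u • τ + ω u + η u • η = 0 := hLu
    have happ : τ u * τ u + ω u u + η u * η u = 0 := by
      have := congrArg (fun f : Module.Dual ℝ V => f u) hLu'
      simpa [smul_eq_mul] using this
    have hωuu : ω u u = 0 := by have := hskew u u; linarith
    have hτ : τ u = 0 := by nlinarith [mul_self_nonneg (τ u), mul_self_nonneg (η u)]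
    have hη : η u = 0 := by nlinarith [mul_self_nonneg (τ u), mul_self_nonneg (η u)]
    have hωu : ω u = 0 := by
      have := hLu'
      rw [hτ, hη, zero_smul, zero_smul, zero_add, add_zero] at this
      exact this
    by_contra hu0
    -- extend u to a basis
    have hli := (linearIndepOn_singleton_iff ℝ (v := id) (i := u)).mpr hu0
    let B0 := Module.Basis.extend hli
    haveI : Fintype (hli.extend (Set.subset_univ ({u} : Set V))) :=
      FiniteDimensional.fintypeBasisIndex B0
    have hcard : Fintype.card (hli.extend (Set.subset_univ ({u} : Set V))) = 2 * n + 2 := by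
      rw [← Module.finrank_eq_card_basis B0, hdim]
    let e := Fintype.equivFinOfCardEq hcard
    let b := B0.reindex e
    have hmem : u ∈ hli.extend (Set.subset_univ ({u} : Set V)) :=
      hli.subset_extend _ (Set.mem_singleton u)
    have hj0 : b (e ⟨u, hmem⟩) = u := by
      simp only [b, Module.Basis.reindex_apply, Equiv.symm_apply_apply, B0]
      exact Module.Basis.extend_apply_self hli ⟨u, hmem⟩
    set j0 := e ⟨u, hmem⟩ with hj0def
    -- the cowedge vanishes on this basis
    have hzero : cowedge n τ η ω ⇑b = 0 := by
      unfold cowedge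
      refine Finset.sum_eq_zero fun σ _ => ?_
      have hσ : σ (σ⁻¹ j0) = j0 := Equiv.apply_symm_apply σ j0
      have hcase : ((σ⁻¹ j0 : Fin (2 * n + 2)) : ℕ) = 0 ∨
          ((σ⁻¹ j0 : Fin (2 * n + 2)) : ℕ) = 1 ∨
          ∃ i : Fin n, ((σ⁻¹ j0 : Fin (2 * n + 2)) : ℕ) = 2 * (i : ℕ) + 2 ∨
            ((σ⁻¹ j0 : Fin (2 * n + 2)) : ℕ) = 2 * (i : ℕ) + 3 := by
        have hlt := (σ⁻¹ j0 : Fin (2 * n + 2)).isLt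
        rcases Nat.lt_or_ge ((σ⁻¹ j0 : Fin (2 * n + 2)) : ℕ) 2 with h | h
        · omega
        · refine Or.inr (Or.inr ⟨⟨(((σ⁻¹ j0 : Fin (2 * n + 2)) : ℕ) - 2) / 2, by omega⟩, ?_⟩)
          simp only [Fin.val_mk]
          omega
      rcases hcase with h | h | ⟨i, h | h⟩
      · have : (⟨0, by omega⟩ : Fin (2 * n + 2)) = σ⁻¹ j0 := Fin.ext (by simp [h.symm])
        rw [this, hσ, hj0, hτ]
        ring
      · have : (⟨1, by omega⟩ : Fin (2 * n + 2)) = σ⁻¹ j0 := Fin.ext (by simp [h.symm])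
        rw [this, hσ, hj0, hη]
        ring
      · have heq : (⟨2 * (i : ℕ) + 2, by have := i.isLt; omega⟩ : Fin (2 * n + 2)) = σ⁻¹ j0 :=
          Fin.ext (by simp [h.symm])
        have hprod : (∏ i' : Fin n,
            ω (b (σ ⟨2 * (i' : ℕ) + 2, by have := i'.isLt; omega⟩))
              (b (σ ⟨2 * (i' : ℕ) + 3, by have := i'.isLt; omega⟩))) = 0 := by
          refine Finset.prod_eq_zero (Finset.mem_univ i) ?_
          rw [heq, hσ, hj0, hωu]
          simp
        rw [hprod]
        ring
      · have heq : (⟨2 * (i : ℕ) + 3, by have := i.isLt; omega⟩ : Fin (2 * n + 2)) = σ⁻¹ j0 :=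
          Fin.ext (by simp [h.symm])
        have hprod : (∏ i' : Fin n,
            ω (b (σ ⟨2 * (i' : ℕ) + 2, by have := i'.isLt; omega⟩))
              (b (σ ⟨2 * (i' : ℕ) + 3, by have := i'.isLt; omega⟩))) = 0 := by
          refine Finset.prod_eq_zero (Finset.mem_univ i) ?_
          rw [heq, hσ, hj0, hskew, hωu]
          simp
        rw [hprod]
        ring
    -- but it cannot vanish on a basis
    obtain ⟨w, hw⟩ := hvol
    have hGne : MultilinearMap.alternatization (cowF n τ η ω) ≠ 0 := by
      intro hG
      apply hw
      rw [cowedge_eq_alt', hG]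
      rfl
    have hdet := (MultilinearMap.alternatization (cowF n τ η ω)).eq_smul_basis_det b
    have hb : MultilinearMap.alternatization (cowF n τ η ω) ⇑b = 0 := by
      rw [← cowedge_eq_alt']
      exact hzero
    rw [hb, zero_smul] at hdet
    exact hGne hdet
  have hinj : Function.Injective L := by
    rw [← LinearMap.ker_eq_bot]
    exact (Submodule.eq_bot_iff _).mpr fun u hu => hker u (LinearMap.mem_ker.mp hu)
  have hsurj : Function.Surjective L :=
    (LinearMap.injective_iff_surjective_of_finrank_eq_finrank
      Subspace.dual_finrank_eq.symm).mp hinj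
  exact ⟨hinj, hsurj⟩
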